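/- Let 0 < a₁ < ... < a_{k−1} be positive reals and 0 = d₀ < d₁ < ... < d_{k−1} be integers. Let W be the k×k matrix with W_{0,0}=1, W_{0,j}=0 for j ≥ 1, and W_{i,j} = aᵢ^{dⱼ} for i ≥ 1. Then W is invertible and the entries of W⁻¹ satisfy: (W⁻¹)_{0,j} = 0 for j ≥ 1, and otherwise sign((W⁻¹)_{i,j}) = (−1)^{i+j}. -/

import Mathlib

open Finset

lemma rootCount : ∀ (n : ℕ) (e : Fin n → ℕ), StrictMono e → ∀ (c : Fin n → ℝ) (x : Fin n → ℝ),
    StrictMono x → (∀ i, 0 < x i) → (∀ i, ∑ j, c j * x i ^ e j = 0) → ∀ j, c j = 0 := by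
  intro n
  induction n with
  | zero => intro e he c x hx hx0 hroot j; exact j.elim0
  | succ n ih =>
    intro e he c x hx hx0 hroot
    have he0 : ∀ j : Fin (n+1), e 0 ≤ e j := fun j => he.monotone (Fin.zero_le j)
    set h : ℝ → ℝ := fun t => ∑ j, c j * t ^ (e j - e 0) with hh
    have hdiff : ∀ (t : ℝ) (j : Fin (n+1)), DifferentiableAt ℝ (fun t : ℝ => c j * t ^ (e j - e 0)) t := by
      intro t j
      exact ((differentiable_pow _).const_mul _).differentiableAt
    have hcont : Continuous h := by
      apply continuous_finset_sum
      intro j _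
      exact continuous_const.mul (continuous_pow _)
    have hderiv : ∀ t : ℝ, deriv h t = ∑ j, c j * (((e j - e 0 : ℕ) : ℝ) * t ^ (e j - e 0 - 1)) := by
      intro t
      rw [hh, deriv_fun_sum (fun j _ => hdiff t j)]
      apply Finset.sum_congr rfl
      intro j _
      rw [deriv_const_mul _ (differentiable_pow _).differentiableAt, deriv_pow_field]
    have hzero : ∀ i, h (x i) = 0 := by
      intro i
      have hxi := hx0 i
      have key : h (x i) * (x i) ^ (e 0) = 0 := by
        rw [hh]
        simp only [Finset.sum_mul]
        rw [← hroot i]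
        apply Finset.sum_congr rfl
        intro j _
        rw [mul_assoc, ← pow_add, Nat.sub_add_cancel (he0 j)]
      exact (mul_eq_zero.mp key).resolve_right (pow_ne_zero _ hxi.ne')
    have H : ∀ i : Fin n, ∃ y ∈ Set.Ioo (x i.castSucc) (x i.succ), deriv h y = 0 := by
      intro i
      exact exists_deriv_eq_zero (hx (Fin.castSucc_lt_succ : i.castSucc < i.succ)) hcont.continuousOn
        (by rw [hzero, hzero])
    choose y hy hdy using H
    have hy_pos : ∀ i, 0 < y i := fun i => (hx0 i.castSucc).trans (hy i).1
    have hy_mono : StrictMono y := by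
      intro i j hij
      calc y i < x i.succ := (hy i).2
        _ ≤ x j.castSucc := hx.monotone (by
            rw [Fin.le_def]
            simpa using hij)
        _ < y j := (hy j).1
    have hsum : ∀ i : Fin n, ∑ j : Fin n, (c j.succ * ((e j.succ - e 0 : ℕ) : ℝ)) * (y i) ^ (e j.succ - e 0 - 1) = 0 := by
      intro i
      have h1 := hdy i
      rw [hderiv] at h1
      rw [Fin.sum_univ_succ] at h1
      simp only [Nat.sub_self, Nat.cast_zero, zero_mul, mul_zero, zero_add] at h1
      rw [← h1]
      apply Finset.sum_congr rfl
      intro j _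
      ring
    have he' : StrictMono (fun j : Fin n => e j.succ - e 0 - 1) := by
      intro i j hij
      have h1 : e i.succ < e j.succ := he (by simpa using hij)
      have h2 : e 0 < e i.succ := he (Fin.succ_pos i)
      simp only
      omega
    have hcs : ∀ j : Fin n, c j.succ * ((e j.succ - e 0 : ℕ) : ℝ) = 0 :=
      ih _ he' _ y hy_mono hy_pos hsum
    have hcsucc : ∀ j : Fin n, c j.succ = 0 := by
      intro j
      have h2 : e 0 < e j.succ := he (Fin.succ_pos j)
      have hne : ((e j.succ - e 0 : ℕ) : ℝ) ≠ 0 := by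
        simp only [ne_eq, Nat.cast_eq_zero]
        omega
      exact (mul_eq_zero.mp (hcs j)).resolve_right hne
    have hc0 : c 0 = 0 := by
      have h1 := hroot 0
      rw [Fin.sum_univ_succ] at h1
      simp only [hcsucc, zero_mul, Finset.sum_const_zero, add_zero] at h1
      exact (mul_eq_zero.mp h1).resolve_right (pow_ne_zero _ (hx0 0).ne')
    intro j
    refine Fin.cases hc0 hcsucc j


lemma detPos : ∀ (n : ℕ) (x : Fin n → ℝ) (e : Fin n → ℕ), StrictMono x → (∀ i, 0 < x i) →
    StrictMono e → 0 < (Matrix.of fun i j => x i ^ e j).det := by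
  intro n
  induction n with
  | zero => intro x e _ _ _; simp [Matrix.det_fin_zero]
  | succ n ih =>
    intro x e hx hx0 he
    set C : Fin (n+1) → ℝ := fun j =>
      (-1 : ℝ) ^ ((n : ℕ) + (j : ℕ)) *
        (Matrix.of fun i' j' : Fin n => x (Fin.castSucc i') ^ e (j.succAbove j')).det with hC
    set f : ℝ → ℝ := fun t => ∑ j, C j * t ^ (e j) with hf
    -- f t is det of matrix with last row replaced by powers of t
    have claim1 : ∀ t : ℝ,
        (Matrix.of fun i j : Fin (n+1) => (Function.update x (Fin.last n) t) i ^ e j).det = f t := by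
      intro t
      rw [Matrix.det_succ_row _ (Fin.last n)]
      apply Finset.sum_congr rfl
      intro j _
      have hsub : ((Matrix.of fun i j : Fin (n+1) => (Function.update x (Fin.last n) t) i ^ e j).submatrix
          (Fin.last n).succAbove j.succAbove) =
          Matrix.of fun i' j' : Fin n => x (Fin.castSucc i') ^ e (j.succAbove j') := by
        ext i' j'
        simp [Fin.succAbove_last, Function.update_of_ne (Fin.castSucc_lt_last i').ne]
      rw [hsub]
      simp only [Matrix.of_apply, Function.update_self, hC, hf, Fin.val_last]
      ring
    have hClast : 0 < C (Fin.last n) := by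
      rw [hC]
      simp only [Fin.val_last, Fin.succAbove_last]
      rw [show ((-1 : ℝ) ^ (n + n) = 1) from Even.neg_one_pow ⟨n, rfl⟩, one_mul]
      exact ih (x ∘ Fin.castSucc) (e ∘ Fin.castSucc) (hx.comp Fin.strictMono_castSucc)
        (fun i => hx0 _) (he.comp Fin.strictMono_castSucc)
    have claim2 : ∀ i : Fin n, f (x (Fin.castSucc i)) = 0 := by
      intro i
      rw [← claim1]
      apply Matrix.det_zero_of_row_eq (Fin.castSucc_lt_last i).ne
      funext j
      simp [Function.update_of_ne (Fin.castSucc_lt_last i).ne, Function.update_self]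
    have hgoal : (Matrix.of fun i j : Fin (n+1) => x i ^ e j).det = f (x (Fin.last n)) := by
      rw [← claim1, Function.update_eq_self]
    rw [hgoal]
    -- now show f (x last) > 0
    by_contra hneg
    push_neg at hneg
    -- in either case we produce n+1 strictly monotone positive roots of f
    have key : ∀ z : Fin (n+1) → ℝ, StrictMono z → (∀ i, 0 < z i) → (∀ i, f (z i) = 0) → False := by
      intro z hz hz0 hzr
      have := rootCount (n+1) e he C z hz hz0 (fun i => hzr i)
      exact absurd (this (Fin.last n)) hClast.ne'
    rcases eq_or_lt_of_le hneg with heq | hlt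
    · apply key x hx hx0
      intro i
      refine Fin.lastCases ?_ ?_ i
      · exact heq
      · exact claim2
    · -- f (x last) < 0; find T with f T > 0
      have hcont : Continuous f := by
        apply continuous_finset_sum
        intro j _
        exact continuous_const.mul (continuous_pow _)
      -- n ≥ 1 or n = 0
      rcases Nat.eq_zero_or_pos n with hn | hn
      · subst hn
        have : f (x (Fin.last 0)) = C 0 * (x 0) ^ (e 0) := by
          rw [hf]; simp [Fin.sum_univ_one]
        rw [this] at hlt
        have : 0 < C 0 * (x 0) ^ (e 0) := mul_pos hClast (pow_pos (hx0 0) _)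
        linarith
      · have helast : 1 ≤ e (Fin.last n) := by
          have : e 0 < e (Fin.last n) := he (by
            rw [Fin.lt_def]; simpa using hn)
          omega
        set S : ℝ := ∑ j ∈ Finset.univ.erase (Fin.last n), |C j| with hS
        have hS0 : 0 ≤ S := Finset.sum_nonneg fun j _ => abs_nonneg _
        set T : ℝ := max (max 1 (x (Fin.last n) + 1)) ((S + 1) / C (Fin.last n)) with hT
        have hT1 : 1 ≤ T := le_trans (le_max_left _ _) (le_max_left _ _)
        have hTx : x (Fin.last n) < T :=
          lt_of_lt_of_le (lt_add_one _) (le_trans (le_max_right _ _) (le_max_left _ _))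
        have hTS : S < C (Fin.last n) * T := by
          have h1 : (S + 1) / C (Fin.last n) ≤ T := le_max_right _ _
          have := (div_le_iff₀ hClast).mp h1
          nlinarith
        have hfT : 0 < f T := by
          have hbound : ∀ j ∈ Finset.univ.erase (Fin.last n),
              -( |C j| * T ^ (e (Fin.last n) - 1)) ≤ C j * T ^ (e j) := by
            intro j hj
            have hjlt : j < Fin.last n := (Fin.lt_last_iff_ne_last).mpr (Finset.mem_erase.mp hj).1
            have hej : e j ≤ e (Fin.last n) - 1 := by
              have := he hjlt; omega
            have hTp : (0:ℝ) < T := lt_of_lt_of_le one_pos hT1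
            have h2 : T ^ (e j) ≤ T ^ (e (Fin.last n) - 1) := pow_le_pow_right₀ hT1 hej
            have h3 : |C j * T ^ e j| ≤ |C j| * T ^ (e (Fin.last n) - 1) := by
              rw [abs_mul, abs_of_nonneg (pow_nonneg hTp.le _)]
              exact mul_le_mul_of_nonneg_left h2 (abs_nonneg _)
            have := neg_abs_le (C j * T ^ e j)
            linarith
          have hsplit : f T = C (Fin.last n) * T ^ (e (Fin.last n)) +
              ∑ j ∈ Finset.univ.erase (Fin.last n), C j * T ^ (e j) :=
            (Finset.add_sum_erase _ (fun j => C j * T ^ (e j)) (Finset.mem_univ (Fin.last n))).symm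
          have hsum_ge : -(S * T ^ (e (Fin.last n) - 1)) ≤
              ∑ j ∈ Finset.univ.erase (Fin.last n), C j * T ^ (e j) := by
            rw [hS, Finset.sum_mul, ← Finset.sum_neg_distrib]
            exact Finset.sum_le_sum hbound
          have hTp : (0:ℝ) < T := lt_of_lt_of_le one_pos hT1
          have hpow : T ^ (e (Fin.last n)) = T ^ (e (Fin.last n) - 1) * T := by
            rw [← pow_succ]
            congr 1
            omega
          have hpos : 0 < T ^ (e (Fin.last n) - 1) := pow_pos hTp _
          rw [hsplit]
          have : S * T ^ (e (Fin.last n) - 1) < C (Fin.last n) * T ^ (e (Fin.last n)) := by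
            rw [hpow, ← mul_assoc]
            calc S * T ^ (e (Fin.last n) - 1) = T ^ (e (Fin.last n) - 1) * S := by ring
            _ < T ^ (e (Fin.last n) - 1) * (C (Fin.last n) * T) := by
                exact mul_lt_mul_of_pos_left hTS hpos
            _ = C (Fin.last n) * T ^ (e (Fin.last n) - 1) * T := by ring
          linarith
        -- IVT on (x last, T)
        have hIVT : ∃ r ∈ Set.Ioo (x (Fin.last n)) T, f r = 0 := by
          have h1 : (0:ℝ) ∈ Set.Ioo (f (x (Fin.last n))) (f T) := ⟨hlt, hfT⟩
          have := intermediate_value_Ioo hTx.le hcont.continuousOn h1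
          obtain ⟨r, hr, hfr⟩ := this
          exact ⟨r, hr, hfr⟩
        obtain ⟨r, hr, hfr⟩ := hIVT
        apply key (Function.update x (Fin.last n) r)
        · intro i j hij
          rcases eq_or_ne j (Fin.last n) with rfl | hj
          · rw [Function.update_self, Function.update_of_ne hij.ne]
            calc x i ≤ x (Fin.last n) := hx.monotone (Fin.le_last i)
              _ < r := hr.1
          · have hi : i ≠ Fin.last n := by
              intro h; subst h
              exact absurd (hij.trans_le (Fin.le_last j)) (lt_irrefl _)
            rw [Function.update_of_ne hi, Function.update_of_ne hj]
            exact hx hij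
        · intro i
          rcases eq_or_ne i (Fin.last n) with rfl | hi
          · rw [Function.update_self]
            exact (hx0 _).trans hr.1
          · rw [Function.update_of_ne hi]
            exact hx0 i
        · intro i
          rcases eq_or_ne i (Fin.last n) with rfl | hi
          · rw [Function.update_self]; exact hfr
          · rw [Function.update_of_ne hi]
            obtain ⟨i', rfl⟩ := Fin.exists_castSucc_eq.mpr hi
            exact claim2 i'

lemma detPos0 (n : ℕ) (x : Fin n → ℝ) (e : Fin n → ℕ) (hx : StrictMono x)
    (hx0 : ∀ h : 0 < n, x ⟨0, h⟩ = 0) (he : StrictMono e) (he0 : ∀ h : 0 < n, e ⟨0, h⟩ = 0) :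
    0 < (Matrix.of fun i j => x i ^ e j).det := by
  rcases n with _ | n
  · simp [Matrix.det_fin_zero]
  · have hx0' : x 0 = 0 := hx0 (Nat.succ_pos n)
    have he0' : e 0 = 0 := he0 (Nat.succ_pos n)
    rw [Matrix.det_succ_row_zero]
    have hterm : ∀ j : Fin (n+1), j ≠ 0 →
        (-1 : ℝ) ^ (j : ℕ) * (Matrix.of fun i j : Fin (n+1) => x i ^ e j) 0 j *
          ((Matrix.of fun i j : Fin (n+1) => x i ^ e j).submatrix Fin.succ j.succAbove).det = 0 := by
      intro j hj
      have : (Matrix.of fun i j : Fin (n+1) => x i ^ e j) 0 j = 0 := by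
        simp only [Matrix.of_apply, hx0']
        have : 0 < e j := by
          have := he (Fin.pos_of_ne_zero hj)
          omega
        exact zero_pow this.ne'
      rw [this, mul_zero, zero_mul]
    rw [Finset.sum_eq_single 0 (fun j _ hj => hterm j hj) (fun h => absurd (Finset.mem_univ _) h)]
    simp only [Matrix.of_apply, hx0', he0', pow_zero, Fin.val_zero, one_mul, mul_one,
      Fin.succAbove_zero]
    have : ((Matrix.of fun i j : Fin (n+1) => x i ^ e j).submatrix Fin.succ Fin.succ) =
        Matrix.of fun i j : Fin n => x (Fin.succ i) ^ e (Fin.succ j) := by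
      ext i j; simp
    rw [this]
    exact detPos n (x ∘ Fin.succ) (e ∘ Fin.succ) (hx.comp Fin.strictMono_succ)
      (fun i => by rw [← hx0']; exact hx (Fin.succ_pos i)) (he.comp Fin.strictMono_succ)

lemma adjugate_eq (n : ℕ) (M : Matrix (Fin (n+1)) (Fin (n+1)) ℝ) (i j : Fin (n+1)) :
    M.adjugate i j = (-1 : ℝ) ^ ((i : ℕ) + (j : ℕ)) * (M.submatrix j.succAbove i.succAbove).det := by
  rw [Matrix.adjugate_apply, Matrix.det_succ_row _ j]
  rw [Finset.sum_eq_single i]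
  · rw [Matrix.submatrix_updateRow_succAbove]
    simp only [Matrix.updateRow_self, Pi.single_eq_same]
    rw [add_comm (j:ℕ) (i:ℕ)]
    ring
  · intro l _ hl
    simp [Matrix.updateRow_self, Pi.single_eq_of_ne hl]
  · exact fun h => absurd (Finset.mem_univ _) h

lemma succAbove_zero' {n : ℕ} (p : Fin (n+1)) (h : 0 < n) (hp : p ≠ 0) :
    p.succAbove ⟨0, h⟩ = 0 := by
  have hcs : (Fin.castSucc (⟨0, h⟩ : Fin n) : Fin (n+1)) = 0 := by
    ext; simp
  rw [Fin.succAbove_of_castSucc_lt _ _ (by rw [hcs]; exact Fin.pos_of_ne_zero hp), hcs]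

theorem generalized_vandermonde_zero_node_inverse (k : ℕ) (a : Fin k → ℝ) (d : Fin k → ℕ)
    (ha0 : ∀ h0 : 0 < k, a ⟨0, h0⟩ = 0) (hd0 : ∀ h0 : 0 < k, d ⟨0, h0⟩ = 0)
    (ha_pos : ∀ i : Fin k, (i : ℕ) ≠ 0 → 0 < a i)
    (ha : StrictMono a) (hd : StrictMono d) :
    IsUnit (Matrix.det (Matrix.of fun i j : Fin k => a i ^ d j)) ∧
    ∀ i j : Fin k,
      (((i : ℕ) = 0 ∧ (j : ℕ) ≠ 0) →
        (Matrix.of fun i j : Fin k => a i ^ d j)⁻¹ i j = 0) ∧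
      (¬((i : ℕ) = 0 ∧ (j : ℕ) ≠ 0) →
        0 < (-1 : ℝ) ^ ((i : ℕ) + (j : ℕ)) * (Matrix.of fun i j : Fin k => a i ^ d j)⁻¹ i j) := by
  rcases k with _ | n
  · refine ⟨by simp [Matrix.det_fin_zero], fun i => i.elim0⟩
  set W : Matrix (Fin (n+1)) (Fin (n+1)) ℝ := Matrix.of fun i j => a i ^ d j with hW
  have ha0' : a 0 = 0 := ha0 (Nat.succ_pos n)
  have hd0' : d 0 = 0 := hd0 (Nat.succ_pos n)
  have hdet : 0 < W.det :=
    detPos0 (n+1) a d ha (fun _ => ha0 _) hd (fun _ => hd0 _)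
  have hinv : ∀ i j : Fin (n+1), W⁻¹ i j =
      W.det⁻¹ * ((-1 : ℝ) ^ ((i : ℕ) + (j : ℕ)) * (W.submatrix j.succAbove i.succAbove).det) := by
    intro i j
    rw [Matrix.inv_def, Matrix.smul_apply, adjugate_eq, Ring.inverse_eq_inv', smul_eq_mul]
  refine ⟨isUnit_iff_ne_zero.mpr hdet.ne', fun i j => ⟨?_, ?_⟩⟩
  · rintro ⟨hi, hj⟩
    have hi0 : i = 0 := Fin.ext (by simpa using hi)
    have hj0 : j ≠ 0 := fun h => hj (by simp [h])
    have hn : 0 < n := by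
      have := j.isLt
      have : (j : ℕ) ≠ 0 := hj
      omega
    have hminor : (W.submatrix j.succAbove i.succAbove).det = 0 := by
      apply Matrix.det_eq_zero_of_row_eq_zero ⟨0, hn⟩
      intro l
      have h1 : j.succAbove ⟨0, hn⟩ = 0 := succAbove_zero' j hn hj0
      simp only [Matrix.submatrix_apply, hW, Matrix.of_apply, h1, ha0']
      have h2 : 0 < d (i.succAbove l) := by
        have h3 : i.succAbove l ≠ 0 := by
          rw [hi0, Fin.succAbove_zero]
          exact (Fin.succ_ne_zero l)
        have := hd (Fin.pos_of_ne_zero h3)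
        omega
      exact zero_pow h2.ne'
    rw [hinv, hminor, mul_zero, mul_zero]
  · intro hnot
    rw [hinv]
    have hsq : ((-1 : ℝ) ^ ((i : ℕ) + (j : ℕ))) * ((-1 : ℝ) ^ ((i : ℕ) + (j : ℕ))) = 1 := by
      rw [← pow_add]
      exact Even.neg_one_pow ⟨(i : ℕ) + (j : ℕ), rfl⟩
    have hminor : 0 < (W.submatrix j.succAbove i.succAbove).det := by
      rcases eq_or_ne (j : ℕ) 0 with hj | hj
      · -- j = 0 : delete row 0, all nodes positive
        have hj0 : j = 0 := Fin.ext (by simpa using hj)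
        have hEq : (W.submatrix j.succAbove i.succAbove) =
            Matrix.of fun i' j' : Fin n => (a ∘ Fin.succ) i' ^ (d ∘ i.succAbove) j' := by
          ext i' j'
          simp [hW, hj0, Fin.succAbove_zero]
        rw [hEq]
        exact detPos n _ _ (ha.comp Fin.strictMono_succ)
          (fun i' => by rw [Function.comp_apply, ← ha0']; exact ha (Fin.succ_pos i'))
          (hd.comp (Fin.strictMono_succAbove i))
      · -- j ≠ 0, hence i ≠ 0
        have hi : (i : ℕ) ≠ 0 := fun h => hnot ⟨h, hj⟩
        have hj0 : j ≠ 0 := fun h => hj (by simp [h])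
        have hi0 : i ≠ 0 := fun h => hi (by simp [h])
        have hEq : (W.submatrix j.succAbove i.succAbove) =
            Matrix.of fun i' j' : Fin n => (a ∘ j.succAbove) i' ^ (d ∘ i.succAbove) j' := by
          ext i' j'
          simp [hW]
        rw [hEq]
        refine detPos0 n _ _ (ha.comp (Fin.strictMono_succAbove j)) ?_
          (hd.comp (Fin.strictMono_succAbove i)) ?_
        · intro h
          rw [Function.comp_apply, succAbove_zero' j h hj0, ha0']
        · intro h
          rw [Function.comp_apply, succAbove_zero' i h hi0, hd0']
    calc (0:ℝ) < W.det⁻¹ * (W.submatrix j.succAbove i.succAbove).det :=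
          mul_pos (inv_pos.mpr hdet) hminor
      _ = (-1 : ℝ) ^ ((i : ℕ) + (j : ℕ)) *
          (W.det⁻¹ * ((-1 : ℝ) ^ ((i : ℕ) + (j : ℕ)) * (W.submatrix j.succAbove i.succAbove).det)) := by
          rw [show ∀ p q r : ℝ, p * (q * (p * r)) = (p * p) * (q * r) from fun p q r => by ring,
            hsq, one_mul]
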